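/- Fix β ∈ (0,1) and let R(x) := (1 − x^β)/(1−β) + (1 − (1−x)^β)/(1−β) for x ∈ [0,1] (the one-dimensional negative Tsallis entropy regularizer), with response function F(E) := argmin_{x ∈ [0,1]} { x·E + R(x) }. Suppose F is L-Lipschitz for a constant L > 0, and let c1 := 1/2 − F(1/(20L)) > 0. Then: (a) for every x ∈ (0,1), F((β/(1−β))·(x^{β−1} − (1−x)^{β−1})) = x; and (b) with c3 := 1/2, there exist constants δ', c2 > 0 such that for every 0 < δ ≤ δ' and every E ∈ ℝ: (1) if F(E) ≥ 1/(1+δ) then F(E − c1²/(30Lδ)) ≥ (1+c3)/(1+c3+δ); and (2) if F(E) ≥ 1/(2(1+δ)) then F(E − c3·c1²/(120L) + δ/(4L)) ≥ 1/2 + c2. -/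

import Mathlib

open Set Real

noncomputable def tEf (β x : ℝ) : ℝ := β / (1 - β) * (x ^ (β - 1) - (1 - x) ^ (β - 1))

noncomputable def tf (β E z : ℝ) : ℝ :=
  z * E + ((1 - z ^ β) / (1 - β) + (1 - (1 - z) ^ β) / (1 - β))

lemma tbern {s c : ℝ} (hs : 0 ≤ s) (hc0 : 0 ≤ c) (hc1 : c ≤ 1) :
    s ^ c ≤ 1 + c * (s - 1) := by
  have h := Real.geom_mean_le_arith_mean2_weighted (w₁ := c) (w₂ := 1 - c) (p₁ := s) (p₂ := 1)
      hc0 (by linarith) hs zero_le_one (by ring)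
  rw [Real.one_rpow, mul_one] at h
  linarith

lemma tkey {β a b : ℝ} (hβ0 : 0 < β) (hβ1 : β < 1) (ha : 0 < a) (hab : a ≤ b) :
    β / (1 - β) * (a ^ (β - 1) - b ^ (β - 1)) ≤ β * (b ^ (β - 1) * (b / a - 1)) := by
  have hb : 0 < b := lt_of_lt_of_le ha hab
  have h1β : (0:ℝ) < 1 - β := by linarith
  have hba : 1 ≤ b / a := (one_le_div ha).2 hab
  have hb1 : (b / a) ^ (1 - β) ≤ 1 + (1 - β) * (b / a - 1) :=
    tbern (by positivity) h1β.le (by linarith)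
  have hbp : (0:ℝ) ≤ b ^ (β - 1) := Real.rpow_nonneg hb.le _
  have heq : a ^ (β - 1) = b ^ (β - 1) * (b / a) ^ (1 - β) := by
    have h1 : b ^ (β - 1) * b ^ (1 - β) = 1 := by
      rw [← Real.rpow_add hb]; norm_num
    have h2 : a ^ (β - 1) * a ^ (1 - β) = 1 := by
      rw [← Real.rpow_add ha]; norm_num
    have ha' : (0:ℝ) < a ^ (1 - β) := Real.rpow_pos_of_pos ha _
    rw [Real.div_rpow hb.le ha.le, mul_div_assoc', eq_div_iff ha'.ne']
    nlinarith [h1, h2]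
  have hstep : a ^ (β - 1) - b ^ (β - 1) ≤ b ^ (β - 1) * ((1 - β) * (b / a - 1)) := by
    rw [heq]; nlinarith [hb1, hbp]
  have hfrac : (0:ℝ) ≤ β / (1 - β) := div_nonneg hβ0.le h1β.le
  calc β / (1 - β) * (a ^ (β - 1) - b ^ (β - 1))
      ≤ β / (1 - β) * (b ^ (β - 1) * ((1 - β) * (b / a - 1))) :=
        mul_le_mul_of_nonneg_left hstep hfrac
    _ = β * (b ^ (β - 1) * (b / a - 1)) := by field_simp

lemma trpow_anti {β a b : ℝ} (hβ1 : β < 1) (ha : 0 < a) (hab : a ≤ b) :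
    b ^ (β - 1) ≤ a ^ (β - 1) :=
  Real.rpow_le_rpow_of_nonpos ha hab (by linarith)

lemma trpow_le_inv {β t : ℝ} (hβ0 : 0 < β) (ht : 0 < t) (ht1 : t ≤ 1) :
    t ^ (β - 1) ≤ t⁻¹ := by
  have he : t ^ (β - 1) = t ^ β * t⁻¹ := by
    rw [show β - 1 = β + (-1) by ring, Real.rpow_add ht, Real.rpow_neg_one]
  rw [he]
  have h1 : t ^ β ≤ 1 := Real.rpow_le_one ht.le ht1 hβ0.le
  have h2 : (0:ℝ) ≤ t⁻¹ := by positivity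
  nlinarith

lemma tf_cont {β : ℝ} (hβ0 : 0 < β) (E : ℝ) : Continuous (tf β E) := by
  unfold tf
  have h := Real.continuous_rpow_const hβ0.le
  exact (continuous_id.mul continuous_const).add
    (((continuous_const.sub h).div_const _).add
      ((continuous_const.sub (h.comp (continuous_const.sub continuous_id))).div_const _))

lemma tf_hasDerivAt {β : ℝ} (hβ0 : 0 < β) (hβ1 : β < 1) (E x : ℝ)
    (hx0 : 0 < x) (hx1 : x < 1) :
    HasDerivAt (tf β E) (E - tEf β x) x := by
  have h1β : (1:ℝ) - β ≠ 0 := by intro h; linarith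
  have h2 : HasDerivAt (fun z : ℝ => z ^ β) (β * x ^ (β - 1)) x :=
    Real.hasDerivAt_rpow_const (Or.inl hx0.ne')
  have hinner : HasDerivAt (fun z : ℝ => 1 - z) (-1) x := (hasDerivAt_id x).const_sub 1
  have h3 : HasDerivAt (fun z : ℝ => (1 - z) ^ β) (β * (1 - x) ^ (β - 1) * (-1)) x := by
    have houter : HasDerivAt (fun y : ℝ => y ^ β) (β * (1 - x) ^ (β - 1)) (1 - x) :=
      Real.hasDerivAt_rpow_const (Or.inl (by intro h; rw [sub_eq_zero] at h; exact hx1.ne h.symm))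
    exact houter.comp x hinner
  have hsum : HasDerivAt (tf β E)
      (E + ((-(β * x ^ (β - 1))) / (1 - β) + (-(β * (1 - x) ^ (β - 1) * (-1))) / (1 - β))) x := by
    unfold tf
    exact (hasDerivAt_mul_const E).add
      (((h2.const_sub 1).div_const (1 - β)).add ((h3.const_sub 1).div_const (1 - β)))
  convert hsum using 1
  unfold tEf
  field_simp
  ring

lemma tEf_anti {β : ℝ} (hβ0 : 0 < β) (hβ1 : β < 1) {a b : ℝ}
    (ha : 0 < a) (hab : a ≤ b) (hb : b < 1) : tEf β b ≤ tEf β a := by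
  have h1 : b ^ (β - 1) ≤ a ^ (β - 1) := trpow_anti hβ1 ha hab
  have h2 : (1 - a) ^ (β - 1) ≤ (1 - b) ^ (β - 1) :=
    trpow_anti hβ1 (by linarith) (by linarith)
  have hκ : (0:ℝ) ≤ β / (1 - β) := div_nonneg hβ0.le (by linarith)
  unfold tEf
  apply mul_le_mul_of_nonneg_left _ hκ
  linarith

lemma tf_min {β : ℝ} (hβ0 : 0 < β) (hβ1 : β < 1) {x : ℝ} (hx : x ∈ Set.Ioo (0:ℝ) 1) :
    ∀ z ∈ Set.Icc (0:ℝ) 1, tf β (tEf β x) x ≤ tf β (tEf β x) z := by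
  obtain ⟨hx0, hx1⟩ := hx
  have hcont : Continuous (tf β (tEf β x)) := tf_cont hβ0 _
  have hA : AntitoneOn (tf β (tEf β x)) (Set.Icc 0 x) := by
    apply antitoneOn_of_deriv_nonpos (convex_Icc _ _) hcont.continuousOn
    · intro z hz; rw [interior_Icc] at hz
      exact (tf_hasDerivAt hβ0 hβ1 _ z hz.1 (hz.2.trans hx1)).differentiableAt.differentiableWithinAt
    · intro z hz; rw [interior_Icc] at hz
      rw [(tf_hasDerivAt hβ0 hβ1 _ z hz.1 (hz.2.trans hx1)).deriv]
      have := tEf_anti hβ0 hβ1 hz.1 hz.2.le hx1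
      linarith
  have hM : MonotoneOn (tf β (tEf β x)) (Set.Icc x 1) := by
    apply monotoneOn_of_deriv_nonneg (convex_Icc _ _) hcont.continuousOn
    · intro z hz; rw [interior_Icc] at hz
      exact (tf_hasDerivAt hβ0 hβ1 _ z (hx0.trans hz.1) hz.2).differentiableAt.differentiableWithinAt
    · intro z hz; rw [interior_Icc] at hz
      rw [(tf_hasDerivAt hβ0 hβ1 _ z (hx0.trans hz.1) hz.2).deriv]
      have := tEf_anti hβ0 hβ1 hx0 hz.1.le hz.2
      linarith
  intro z hz
  rcases le_total z x with h | h
  · exact hA ⟨hz.1, h⟩ ⟨hx0.le, le_refl x⟩ h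
  · exact hM ⟨le_refl x, hx1.le⟩ ⟨h, hz.2⟩ h

set_option maxHeartbeats 1000000 in
/-- the main assumption holds for the negative Tsallis entropy regularizer
`R(x) = (1 − x^β)/(1−β) + (1 − (1−x)^β)/(1−β)` with parameter `β ∈ (0,1)`. Here `F E` is
the unique minimizer over `[0,1]` of `x ↦ x·E + R(x)`, assumed `L`-Lipschitz, and
`c1 := 1/2 − F(1/(20L)) > 0`. Part (a): the inverse formula for `F`; part (b): with
`c3 = 1/2` there exist `δ', c2 > 0` making items (1) and (2) hold. -/
theorem tsallis_main_assumption
    (β : ℝ) (hβ : β ∈ Set.Ioo (0 : ℝ) 1)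
    (F : ℝ → ℝ)
    (hF : ∀ E : ℝ, F E ∈ Set.Icc (0 : ℝ) 1 ∧
      ∀ z ∈ Set.Icc (0 : ℝ) 1, z ≠ F E →
        F E * E + ((1 - F E ^ β) / (1 - β) + (1 - (1 - F E) ^ β) / (1 - β)) <
          z * E + ((1 - z ^ β) / (1 - β) + (1 - (1 - z) ^ β) / (1 - β)))
    (L : ℝ) (hL : 0 < L)
    (hLip : ∀ a b : ℝ, |F a - F b| ≤ L * |a - b|)
    (hc1 : 0 < 1 / 2 - F (1 / (20 * L))) :
    (∀ x ∈ Set.Ioo (0 : ℝ) 1,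
      F ((β / (1 - β)) * (x ^ (β - 1) - (1 - x) ^ (β - 1))) = x) ∧
    ∃ δ' c2 : ℝ, 0 < δ' ∧ 0 < c2 ∧
      ∀ δ : ℝ, 0 < δ → δ ≤ δ' → ∀ E : ℝ,
        (1 / (1 + δ) ≤ F E →
          (1 + (1 / 2 : ℝ)) / (1 + (1 / 2 : ℝ) + δ) ≤
            F (E - (1 / 2 - F (1 / (20 * L))) ^ 2 / (30 * L * δ))) ∧
        (1 / (2 * (1 + δ)) ≤ F E →
          1 / 2 + c2 ≤
            F (E - (1 / 2 : ℝ) * (1 / 2 - F (1 / (20 * L))) ^ 2 / (120 * L) +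
              δ / (4 * L))) := by
  obtain ⟨hβ0, hβ1⟩ := hβ
  have h1β : (0:ℝ) < 1 - β := by linarith
  -- basic facts about F
  have hmin : ∀ (E : ℝ), ∀ z ∈ Set.Icc (0:ℝ) 1, tf β E (F E) ≤ tf β E z := by
    intro E z hz
    rcases eq_or_ne z (F E) with h | h
    · exact le_of_eq (by rw [h])
    · have := (hF E).2 z hz h
      simp only [tf]
      linarith
  have hmono : ∀ E1 E2 : ℝ, E1 ≤ E2 → F E2 ≤ F E1 := by
    intro E1 E2 h12
    rcases eq_or_lt_of_le h12 with h | h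
    · rw [h]
    · have h1 := hmin E1 (F E2) (hF E2).1
      have h2 := hmin E2 (F E1) (hF E1).1
      simp only [tf] at h1 h2
      by_contra hc
      push_neg at hc
      nlinarith [h1, h2, mul_pos (sub_pos.2 hc) (sub_pos.2 h)]
  have parta : ∀ x ∈ Set.Ioo (0:ℝ) 1, F (tEf β x) = x := by
    intro x hx
    by_contra hne
    have h1 := (hF (tEf β x)).2 x ⟨hx.1.le, hx.2.le⟩ (fun h => hne h.symm)
    have h2 := tf_min hβ0 hβ1 hx (F (tEf β x)) (hF (tEf β x)).1
    simp only [tf] at h2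
    linarith
  have partc : ∀ E : ℝ, 0 < F E → F E < 1 → E = tEf β (F E) := by
    intro E h0 h1
    have hloc : IsLocalMin (tf β E) (F E) :=
      Filter.eventually_of_mem (Icc_mem_nhds h0 h1) (fun z hz => hmin E z hz)
    have hd := tf_hasDerivAt hβ0 hβ1 E (F E) h0 h1
    have := hloc.hasDerivAt_eq_zero hd
    linarith
  constructor
  · intro x hx
    have := parta x hx
    simpa [tEf] using this
  · set c1 : ℝ := 1 / 2 - F (1 / (20 * L)) with hc1def
    set T : ℝ := c1 ^ 2 / (30 * L) with hTdef
    have hc1pos : 0 < c1 := hc1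
    have hT0 : 0 < T := by
      rw [hTdef]; exact div_pos (pow_pos hc1pos 2) (by positivity)
    set c2v : ℝ := min (1/4) (c1 ^ 2 / (15360 * L)) with hc2vdef
    have hc20 : 0 < c2v :=
      lt_min (by norm_num) (div_pos (pow_pos hc1pos 2) (by positivity))
    have hc2quarter : c2v ≤ 1/4 := min_le_left _ _
    have hc2L : c2v ≤ c1 ^ 2 / (15360 * L) := min_le_right _ _
    clear_value c1 T c2v
    refine ⟨min (min (1/2) ((T/4) ^ (β⁻¹))) (min (min (T/2) (c1 ^ 2 / (3840 * L))) (c1 ^ 2 / 120)),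
      c2v, lt_min (lt_min (by norm_num) (Real.rpow_pos_of_pos (div_pos hT0 (by norm_num)) _))
        (lt_min (lt_min (div_pos hT0 (by norm_num)) (div_pos (pow_pos hc1pos 2) (by positivity)))
          (div_pos (pow_pos hc1pos 2) (by norm_num))), hc20, ?_⟩
    intro δ hδ0 hδ' E
    have hδhalf : δ ≤ 1/2 := hδ'.trans ((min_le_left _ _).trans (min_le_left _ _))
    have hδT4 : δ ^ β ≤ T/4 := by
      have h1 : δ ≤ (T/4) ^ (β⁻¹) := hδ'.trans ((min_le_left _ _).trans (min_le_right _ _))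
      have h2 : δ ^ β ≤ ((T/4) ^ (β⁻¹)) ^ β := Real.rpow_le_rpow hδ0.le h1 hβ0.le
      have h3 : ((T/4) ^ (β⁻¹)) ^ β = T/4 := by
        rw [← Real.rpow_mul (div_pos hT0 (by norm_num)).le, inv_mul_cancel₀ hβ0.ne',
          Real.rpow_one]
      linarith [h2, h3.le, h3.ge]
    have hδT2 : δ ≤ T/2 := hδ'.trans ((min_le_right _ _).trans ((min_le_left _ _).trans (min_le_left _ _)))
    have hδ38 : δ ≤ c1 ^ 2 / (3840 * L) :=
      hδ'.trans ((min_le_right _ _).trans ((min_le_left _ _).trans (min_le_right _ _)))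
    have hδ120 : δ ≤ c1 ^ 2 / 120 := hδ'.trans ((min_le_right _ _).trans (min_le_right _ _))
    have h1δ : (0:ℝ) < 1 + δ := by linarith
    constructor
    -- ITEM (1)
    · intro hE
      set y1 : ℝ := (1 + (1/2:ℝ)) / (1 + (1/2:ℝ) + δ) with hy1def
      have h32 : (0:ℝ) < 1 + 1/2 + δ := by linarith
      have hy1mem : y1 ∈ Set.Ioo (0:ℝ) 1 := by
        constructor
        · rw [hy1def]; positivity
        · rw [hy1def, div_lt_one h32]; linarith
      have hΔpos : 0 < c1 ^ 2 / (30 * L * δ) := div_pos (pow_pos hc1pos 2) (by positivity)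
      rcases lt_or_ge (F E) 1 with hFE1 | hFE1
      · -- F E < 1
        have hy00 : (0:ℝ) < 1 / (1 + δ) := by positivity
        have hx0 : 0 < F E := lt_of_lt_of_le hy00 hE
        have hEeq : E = tEf β (F E) := partc E hx0 hFE1
        have hmono1 : tEf β (F E) ≤ tEf β (1 / (1 + δ)) := tEf_anti hβ0 hβ1 hy00 hE hFE1
        -- numeric bound
        have hy01 : 1 / (1 + δ) ≤ y1 := by
          rw [hy1def, div_le_div_iff₀ h1δ h32]; linarith
        have hy11 : y1 ≤ 1 := hy1mem.2.le
        have k1 := tkey hβ0 hβ1 hy00 hy01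
        have hq1nn : (0:ℝ) ≤ y1 ^ (β - 1) := Real.rpow_nonneg hy1mem.1.le _
        have hq1 : y1 ^ (β - 1) ≤ 4/3 := by
          have h := trpow_le_inv hβ0 hy1mem.1 hy11
          have h2 : y1⁻¹ ≤ 4/3 := by
            rw [hy1def, inv_div, div_le_iff₀ (by norm_num : (0:ℝ) < 1 + 1/2)]
            linarith
          linarith
        have hr1 : y1 / (1 / (1 + δ)) - 1 ≤ δ/3 := by
          rw [one_div (1+δ), div_inv_eq_mul, hy1def, div_mul_eq_mul_div, sub_le_iff_le_add, div_le_iff₀ h32]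
          linarith [sq_nonneg δ]
        have hr1nn : (0:ℝ) ≤ y1 / (1 / (1 + δ)) - 1 := by
          have : (1:ℝ) ≤ y1 / (1 / (1 + δ)) := (one_le_div hy00).2 hy01
          linarith
        have t1 : β / (1 - β) * ((1 / (1 + δ)) ^ (β - 1) - y1 ^ (β - 1)) ≤ (4/3) * (δ/3) := by
          calc β / (1 - β) * ((1 / (1 + δ)) ^ (β - 1) - y1 ^ (β - 1))
              ≤ β * (y1 ^ (β - 1) * (y1 / (1 / (1 + δ)) - 1)) := k1
            _ ≤ 1 * ((4/3) * (δ/3)) := by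
                apply mul_le_mul hβ1.le
                  (mul_le_mul hq1 hr1 hr1nn (by norm_num))
                  (mul_nonneg hq1nn hr1nn) zero_le_one
            _ = (4/3) * (δ/3) := one_mul _
        -- second term
        have ha2 : (0:ℝ) < 1 - y1 := by linarith [hy1mem.2]
        have hb2eqv : 1 - 1 / (1 + δ) = δ / (1 + δ) := by field_simp; ring
        have ha2eqv : 1 - y1 = δ / (1 + 1/2 + δ) := by
          rw [hy1def]; field_simp; ring
        have hab2 : 1 - y1 ≤ 1 - 1 / (1 + δ) := by linarith
        have k2 := tkey hβ0 hβ1 ha2 hab2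
        have hb2ge : δ/2 ≤ 1 - 1 / (1 + δ) := by
          rw [hb2eqv, le_div_iff₀ h1δ]
          linarith [mul_le_mul_of_nonneg_left hδhalf hδ0.le]
        have hq2 : (1 - 1 / (1 + δ)) ^ (β - 1) ≤ (δ/2) ^ (β - 1) :=
          trpow_anti hβ1 (by positivity) hb2ge
        have hq2nn : (0:ℝ) ≤ (δ/2) ^ (β - 1) := Real.rpow_nonneg (by positivity) _
        have hq2nn' : (0:ℝ) ≤ (1 - 1 / (1 + δ)) ^ (β - 1) := Real.rpow_nonneg (by linarith) _
        have hr2 : (1 - 1 / (1 + δ)) / (1 - y1) - 1 ≤ 1/2 := by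
          have e1 : (1 - 1 / (1 + δ)) / (1 - y1) = (1 + 1/2 + δ) / (1 + δ) := by
            rw [hb2eqv, ha2eqv]
            rw [div_div_div_comm]
            rw [div_self hδ0.ne', div_div_eq_mul_div, one_mul]
          rw [e1, div_sub_one h1δ.ne', div_le_iff₀ h1δ]
          linarith
        have hr2nn : (0:ℝ) ≤ (1 - 1 / (1 + δ)) / (1 - y1) - 1 := by
          have : (1:ℝ) ≤ (1 - 1 / (1 + δ)) / (1 - y1) := (one_le_div ha2).2 hab2
          linarith
        have t2 : β / (1 - β) * ((1 - y1) ^ (β - 1) - (1 - 1 / (1 + δ)) ^ (β - 1))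
            ≤ (δ/2) ^ (β - 1) * (1/2) := by
          calc β / (1 - β) * ((1 - y1) ^ (β - 1) - (1 - 1 / (1 + δ)) ^ (β - 1))
              ≤ β * ((1 - 1 / (1 + δ)) ^ (β - 1) * ((1 - 1 / (1 + δ)) / (1 - y1) - 1)) := k2
            _ ≤ 1 * ((δ/2) ^ (β - 1) * (1/2)) := by
                apply mul_le_mul hβ1.le
                  (mul_le_mul hq2 hr2 hr2nn hq2nn)
                  (mul_nonneg hq2nn' hr2nn) zero_le_one
            _ = (δ/2) ^ (β - 1) * (1/2) := one_mul _
        have hsplit : tEf β (1 / (1 + δ)) - tEf β y1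
            = β / (1 - β) * ((1 / (1 + δ)) ^ (β - 1) - y1 ^ (β - 1))
              + β / (1 - β) * ((1 - y1) ^ (β - 1) - (1 - 1 / (1 + δ)) ^ (β - 1)) := by
          simp only [tEf]; ring
        have hpoweq : (δ/2) ^ (β:ℝ) = (δ/2) * (δ/2) ^ (β - 1) := by
          have hh := Real.rpow_add (show (0:ℝ) < δ/2 by positivity) 1 (β - 1)
          rw [Real.rpow_one] at hh
          rw [show (1:ℝ) + (β - 1) = β by ring] at hh
          exact hh
        have hδ2β : (δ/2) ^ (β:ℝ) ≤ δ ^ β :=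
          Real.rpow_le_rpow (by positivity) (by linarith) hβ0.le
        have hfin : ((4/3) * (δ/3) + (δ/2) ^ (β - 1) * (1/2)) * δ ≤ T := by
          have hh1 : (4/3) * (δ/3) * δ ≤ T/4 := by
            linarith [mul_le_mul_of_nonneg_left hδhalf hδ0.le, hδT2, hT0.le]
          have hh2 : (δ/2) ^ (β - 1) * (1/2) * δ ≤ T/4 := by
            calc (δ/2) ^ (β - 1) * (1/2) * δ = (δ/2) * (δ/2) ^ (β - 1) := by ring
              _ = (δ/2) ^ (β:ℝ) := hpoweq.symm
              _ ≤ δ ^ β := hδ2β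
              _ ≤ T/4 := hδT4
          linarith [hh1, hh2]
        have hnum : tEf β (1 / (1 + δ)) - tEf β y1 ≤ c1 ^ 2 / (30 * L * δ) := by
          have hS : tEf β (1 / (1 + δ)) - tEf β y1 ≤ (4/3) * (δ/3) + (δ/2) ^ (β - 1) * (1/2) := by
            rw [hsplit]; linarith
          have h5 : tEf β (1 / (1 + δ)) - tEf β y1 ≤ T/δ := by
            rw [le_div_iff₀ hδ0]
            calc (tEf β (1 / (1 + δ)) - tEf β y1) * δ
                ≤ ((4/3) * (δ/3) + (δ/2) ^ (β - 1) * (1/2)) * δ :=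
                  mul_le_mul_of_nonneg_right hS hδ0.le
              _ ≤ T := hfin
          have h6 : T/δ = c1 ^ 2 / (30 * L * δ) := by
            rw [hTdef, div_div]
          linarith
        have h2 : E - c1 ^ 2 / (30 * L * δ) ≤ tEf β y1 := by
          rw [hEeq] at hE ⊢
          linarith [hmono1, hnum]
        have h3 := hmono _ _ h2
        rw [parta y1 hy1mem] at h3
        exact h3
      · -- F E = 1 case (1 ≤ F E)
        have h2 := hmono (E - c1 ^ 2 / (30 * L * δ)) E (by linarith)
        have : y1 ≤ 1 := hy1mem.2.le
        linarith
    -- ITEM (2)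
    · intro hE
      have h2δ : (0:ℝ) < 2 * (1 + δ) := by linarith
      have ha00 : (0:ℝ) < 1 / (2 * (1 + δ)) := by positivity
      have h120 : 120 * δ ≤ c1 ^ 2 := by linarith [hδ120]
      have hΔ2 : c1 ^ 2 / (480 * L) ≤ 1 / 2 * c1 ^ 2 / (120 * L) - δ / (4 * L) := by
        have key : 1 / 2 * c1 ^ 2 / (120 * L) - δ / (4 * L) - c1 ^ 2 / (480 * L)
            = (c1 ^ 2 - 120 * δ) / (480 * L) := by
          field_simp; ring
        have h7 : (0:ℝ) ≤ (c1 ^ 2 - 120 * δ) / (480 * L) :=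
          div_nonneg (by linarith) (by positivity)
        linarith [key.ge, key.le, h7]
      have hΔ2pos : (0:ℝ) < c1 ^ 2 / (480 * L) := div_pos (pow_pos hc1pos 2) (by positivity)
      rcases lt_or_ge (F E) 1 with hFE1 | hFE1
      · -- F E < 1
        have hx0 : 0 < F E := lt_of_lt_of_le ha00 hE
        have hEeq : E = tEf β (F E) := partc E hx0 hFE1
        have hmono1 : tEf β (F E) ≤ tEf β (1 / (2 * (1 + δ))) := tEf_anti hβ0 hβ1 ha00 hE hFE1
        have ht2mem : (1/2 + c2v) ∈ Set.Ioo (0:ℝ) 1 :=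
          ⟨by linarith [hc20], by linarith [hc2quarter]⟩
        -- bound tEf β a0 ≤ 4δ
        have ha0half : 1 / (2 * (1 + δ)) ≤ 1/2 := by
          rw [div_le_div_iff₀ h2δ (by norm_num : (0:ℝ) < 2)]
          linarith
        have ha0b : 1 / (2 * (1 + δ)) ≤ 1 - 1 / (2 * (1 + δ)) := by linarith
        have k3 := tkey hβ0 hβ1 ha00 ha0b
        have hbhalf : (1:ℝ)/2 ≤ 1 - 1 / (2 * (1 + δ)) := by linarith
        have hb1 : 1 - 1 / (2 * (1 + δ)) ≤ 1 := by linarith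
        have hq3nn : (0:ℝ) ≤ (1 - 1 / (2 * (1 + δ))) ^ (β - 1) :=
          Real.rpow_nonneg (by linarith) _
        have hq3 : (1 - 1 / (2 * (1 + δ))) ^ (β - 1) ≤ 2 := by
          have hb0 : (0:ℝ) < 1 - 1 / (2 * (1 + δ)) := by linarith
          have h := trpow_le_inv hβ0 hb0 hb1
          have h2 : (1:ℝ) / (1 - 1 / (2 * (1 + δ))) ≤ 2 :=
            (div_le_iff₀ hb0).mpr (by linarith)
          rw [one_div] at h2
          linarith
        have hr3 : (1 - 1 / (2 * (1 + δ))) / (1 / (2 * (1 + δ))) - 1 ≤ 2 * δ := by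
          rw [one_div (2 * (1 + δ)), div_inv_eq_mul]
          have : (1 - (2 * (1 + δ))⁻¹) * (2 * (1 + δ)) = 1 + 2 * δ := by
            field_simp; ring
          rw [this]; linarith
        have hr3nn : (0:ℝ) ≤ (1 - 1 / (2 * (1 + δ))) / (1 / (2 * (1 + δ))) - 1 := by
          have : (1:ℝ) ≤ (1 - 1 / (2 * (1 + δ))) / (1 / (2 * (1 + δ))) :=
            (one_le_div ha00).2 ha0b
          linarith
        have hEa0 : tEf β (1 / (2 * (1 + δ))) ≤ 4 * δ := by
          calc tEf β (1 / (2 * (1 + δ)))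
              ≤ β * ((1 - 1 / (2 * (1 + δ))) ^ (β - 1)
                  * ((1 - 1 / (2 * (1 + δ))) / (1 / (2 * (1 + δ))) - 1)) := k3
            _ ≤ 1 * (2 * (2 * δ)) := by
                apply mul_le_mul hβ1.le
                  (mul_le_mul hq3 hr3 hr3nn (by norm_num))
                  (mul_nonneg hq3nn hr3nn) zero_le_one
            _ ≤ 4 * δ := by linarith
        -- bound -tEf β (1/2 + c2v) ≤ 16 c2v
        have ha4 : (0:ℝ) < 1/2 - c2v := by linarith [hc2quarter]
        have k4 := tkey hβ0 hβ1 ha4 (show 1/2 - c2v ≤ 1/2 + c2v by linarith [hc20])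
        have hq4nn : (0:ℝ) ≤ (1/2 + c2v) ^ (β - 1) := Real.rpow_nonneg (by linarith [hc20]) _
        have hq4 : (1/2 + c2v) ^ (β - 1) ≤ 2 := by
          have hb0 : (0:ℝ) < 1/2 + c2v := by linarith [hc20]
          have h := trpow_le_inv hβ0 hb0 (by linarith [hc2quarter] : 1/2 + c2v ≤ 1)
          have h2 : (1:ℝ) / (1/2 + c2v) ≤ 2 := (div_le_iff₀ hb0).mpr (by linarith [hc20])
          rw [one_div] at h2
          linarith
        have hr4 : (1/2 + c2v) / (1/2 - c2v) - 1 ≤ 8 * c2v := by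
          rw [div_sub_one ha4.ne', div_le_iff₀ ha4]
          linarith [mul_le_mul_of_nonneg_left hc2quarter hc20.le]
        have hr4nn : (0:ℝ) ≤ (1/2 + c2v) / (1/2 - c2v) - 1 := by
          have : (1:ℝ) ≤ (1/2 + c2v) / (1/2 - c2v) :=
            (one_le_div ha4).2 (by linarith [hc20])
          linarith
        have hEt2 : -tEf β (1/2 + c2v) ≤ 16 * c2v := by
          have heq : -tEf β (1/2 + c2v)
              = β / (1 - β) * ((1/2 - c2v) ^ (β - 1) - (1/2 + c2v) ^ (β - 1)) := by
            simp only [tEf]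
            rw [show (1:ℝ) - (1/2 + c2v) = 1/2 - c2v by ring]
            ring
          rw [heq]
          calc β / (1 - β) * ((1/2 - c2v) ^ (β - 1) - (1/2 + c2v) ^ (β - 1))
              ≤ β * ((1/2 + c2v) ^ (β - 1) * ((1/2 + c2v) / (1/2 - c2v) - 1)) := k4
            _ ≤ 1 * (2 * (8 * c2v)) := by
                apply mul_le_mul hβ1.le
                  (mul_le_mul hq4 hr4 hr4nn (by norm_num))
                  (mul_nonneg hq4nn hr4nn) zero_le_one
            _ ≤ 16 * c2v := by linarith
        -- combine
        have h4δ : 4 * δ ≤ c1 ^ 2 / (960 * L) := by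
          have e : 4 * (c1 ^ 2 / (3840 * L)) = c1 ^ 2 / (960 * L) := by
            field_simp; ring
          linarith [hδ38, e.le, e.ge]
        have h16 : 16 * c2v ≤ c1 ^ 2 / (960 * L) := by
          have e : 16 * (c1 ^ 2 / (15360 * L)) = c1 ^ 2 / (960 * L) := by
            field_simp; ring
          linarith [hc2L, e.le, e.ge]
        have hsum960 : c1 ^ 2 / (960 * L) + c1 ^ 2 / (960 * L) = c1 ^ 2 / (480 * L) := by
          field_simp; ring
        have hnum2 : tEf β (1 / (2 * (1 + δ))) - tEf β (1/2 + c2v) ≤ c1 ^ 2 / (480 * L) := by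
          linarith [hEa0, hEt2, h4δ, h16, hsum960.le, hsum960.ge]
        have hle : E - 1 / 2 * c1 ^ 2 / (120 * L) + δ / (4 * L) ≤ tEf β (1/2 + c2v) := by
          rw [hEeq] at hE ⊢
          linarith [hmono1, hΔ2, hnum2]
        have h5 := hmono _ _ hle
        rw [parta _ ht2mem] at h5
        exact h5
      · -- 1 ≤ F E
        have harg : E - 1 / 2 * c1 ^ 2 / (120 * L) + δ / (4 * L) ≤ E := by
          linarith [hΔ2, hΔ2pos]
        have h2 := hmono _ _ harg
        linarith [hc2quarter]
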